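/- Let f(X) = a₀ + a₁X + ⋯ + a_nXⁿ ∈ ℤ[X] and a, b integers with a² < b² and |a_n| > Σ_{i=0}^{n−1}|a_i|(|a+b|/2)^{i−n}. Suppose |f(a)| = p^{k₁} and |f(b)| = p^{k₂}·r^j with p, r distinct primes, k₁ < k₂, r^j < p^{k₁}, r^j < p^{k₂−k₁}, and suppose p ∤ f'(a)·f'(b) and r ∤ f'(b). Then f is a product of at most 1 + ⌊((k₂−k₁)/j)·log_r p⌋ irreducible factors over ℚ. -/

import Mathlib

open Polynomial Real

noncomputable section

/-- `d` is an admissible divisor of `f(a)`. -/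
def AdmDiv (f : Polynomial ℤ) (a d : ℤ) : Prop :=
  d ∣ f.eval a ∧
    Int.gcd d (f.eval a / d) ∣ Int.gcd (f.eval a) (f.derivative.eval a)

/-- `d` is a unitary divisor of `N`. -/
def UnitDiv (N d : ℤ) : Prop := d ∣ N ∧ Int.gcd d (N / d) = 1

/-- `f` is a product of at most `k` nonconstant irreducible factors over `ℚ`
(counting multiplicities): it cannot be written as a product of `k + 1`
nonconstant polynomials over `ℚ`. -/
def FactorsAtMost (f : Polynomial ℤ) (k : ℕ) : Prop :=
  ∀ g : Fin (k + 1) → Polynomial ℚ, (∀ i, 0 < (g i).natDegree) →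
    f.map (Int.castRingHom ℚ) ≠ ∏ i, g i

/-- `q` is the quantity `q_k` of the paper: the greatest ratio `d₂/d₁` of
admissible divisors of `f(b)` and `f(a)` not exceeding `(|f(b)|/|f(a)|)^(1/(k+1))`. -/
def IsQk (f : Polynomial ℤ) (a b : ℤ) (k : ℕ) (q : ℝ) : Prop :=
  IsGreatest {x : ℝ | ∃ d₁ d₂ : ℤ, AdmDiv f a d₁ ∧ AdmDiv f b d₂ ∧
    x = (d₂ : ℝ) / (d₁ : ℝ) ∧
    x ≤ (|((f.eval b : ℤ) : ℝ)| / |((f.eval a : ℤ) : ℝ)|) ^ ((k + 1 : ℝ))⁻¹} q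

/-- `q` is the quantity `q^u_k` of the paper, defined via unitary divisors. -/
def IsQuk (f : Polynomial ℤ) (a b : ℤ) (k : ℕ) (q : ℝ) : Prop :=
  IsGreatest {x : ℝ | ∃ d₁ d₂ : ℤ, UnitDiv (f.eval a) d₁ ∧ UnitDiv (f.eval b) d₂ ∧
    x = (d₂ : ℝ) / (d₁ : ℝ) ∧
    x ≤ (|((f.eval b : ℤ) : ℝ)| / |((f.eval a : ℤ) : ℝ)|) ^ ((k + 1 : ℝ))⁻¹} q

private lemma multiset_prod_lt {s : Multiset ℂ} (hs : s ≠ 0) {F G : ℂ → ℝ}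
    (h0 : ∀ z ∈ s, 0 ≤ F z) (h : ∀ z ∈ s, F z < G z) :
    (s.map F).prod < (s.map G).prod := by
  induction s using Multiset.induction_on with
  | empty => simp at hs
  | cons z t ih =>
    simp only [Multiset.map_cons, Multiset.prod_cons]
    rcases eq_or_ne t 0 with rfl | ht
    · simpa using h z (Multiset.mem_cons_self z 0)
    · refine mul_lt_mul'' (h z (Multiset.mem_cons_self z t))
        (ih ht (fun w hw => h0 w (Multiset.mem_cons_of_mem hw))
          (fun w hw => h w (Multiset.mem_cons_of_mem hw)))
        (h0 z (Multiset.mem_cons_self z t)) ?_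
      exact Multiset.prod_nonneg (by
        intro x hx
        obtain ⟨w, hw, rfl⟩ := Multiset.mem_map.mp hx
        exact h0 w (Multiset.mem_cons_of_mem hw))

private lemma root_bound (f : Polynomial ℤ) (c : ℝ) (hc : 0 < c)
    (hlead : (|f.leadingCoeff| : ℝ) >
      ∑ i ∈ Finset.range f.natDegree, (|f.coeff i| : ℝ) * c ^ ((i : ℤ) - (f.natDegree : ℤ)))
    (z : ℂ) (hz : (f.map (Int.castRingHom ℂ)).eval z = 0) : ‖z‖ < c := by
  by_contra hzc
  push_neg at hzc
  set n := f.natDegree with hn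
  have hzpos : 0 < ‖z‖ := lt_of_lt_of_le hc hzc
  have hdeg : (f.map (Int.castRingHom ℂ)).natDegree = n :=
    natDegree_map_eq_of_injective (fun x y h => Int.cast_injective h) f
  have hsum : ∑ i ∈ Finset.range (n + 1), ((f.coeff i : ℂ)) * z ^ i = 0 := by
    have := Polynomial.eval_eq_sum_range (p := f.map (Int.castRingHom ℂ)) z
    rw [hdeg] at this
    rw [← hz, this]
    refine Finset.sum_congr rfl fun i _ => by simp [Polynomial.coeff_map]
  have hkey : (|f.leadingCoeff| : ℝ) * ‖z‖ ^ n ≤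
      ∑ i ∈ Finset.range n, (|f.coeff i| : ℝ) * ‖z‖ ^ i := by
    have h1 : (f.coeff n : ℂ) * z ^ n = -∑ i ∈ Finset.range n, (f.coeff i : ℂ) * z ^ i := by
      have h2 := Finset.sum_range_succ (fun i => ((f.coeff i : ℂ)) * z ^ i) n
      rw [h2] at hsum
      linear_combination hsum
    have h3 := congrArg norm h1
    rw [norm_neg, norm_mul, norm_pow] at h3
    calc (|f.leadingCoeff| : ℝ) * ‖z‖ ^ n
        = ‖(f.coeff n : ℂ)‖ * ‖z‖ ^ n := by
          rw [Polynomial.leadingCoeff, Complex.norm_intCast, ← hn]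
      _ = ‖∑ i ∈ Finset.range n, (f.coeff i : ℂ) * z ^ i‖ := h3
      _ ≤ ∑ i ∈ Finset.range n, ‖(f.coeff i : ℂ) * z ^ i‖ :=
          norm_sum_le _ _
      _ = ∑ i ∈ Finset.range n, (|f.coeff i| : ℝ) * ‖z‖ ^ i := by
          refine Finset.sum_congr rfl fun i _ => ?_
          rw [norm_mul, norm_pow, Complex.norm_intCast]
  have hterm : ∀ i ∈ Finset.range n, (|f.coeff i| : ℝ) * ‖z‖ ^ i ≤
      ((|f.coeff i| : ℝ) * c ^ ((i : ℤ) - (n : ℤ))) * ‖z‖ ^ n := by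
    intro i hi
    have hin : i < n := Finset.mem_range.mp hi
    have hcz : c ^ ((i : ℤ) - (n : ℤ)) = c ^ i / c ^ n := by
      rw [zpow_sub₀ hc.ne', zpow_natCast, zpow_natCast]
    have e1 : c ^ n = c ^ i * c ^ (n - i) := by rw [← pow_add]; congr 1; omega
    have e2 : ‖z‖ ^ n = ‖z‖ ^ i * ‖z‖ ^ (n - i) := by
      rw [← pow_add]; congr 1; omega
    have e3 : c ^ (n - i) ≤ ‖z‖ ^ (n - i) := pow_le_pow_left₀ hc.le hzc _
    have h3 : ‖z‖ ^ i * c ^ n ≤ c ^ i * ‖z‖ ^ n := by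
      rw [e1, e2]
      calc ‖z‖ ^ i * (c ^ i * c ^ (n - i))
          = (c ^ i * ‖z‖ ^ i) * c ^ (n - i) := by ring
        _ ≤ (c ^ i * ‖z‖ ^ i) * ‖z‖ ^ (n - i) :=
            mul_le_mul_of_nonneg_left e3 (by positivity)
        _ = c ^ i * (‖z‖ ^ i * ‖z‖ ^ (n - i)) := by ring
    have h4 := mul_le_mul_of_nonneg_left h3 (show (0:ℝ) ≤ (|f.coeff i| : ℝ) by positivity)
    have hcn : (0:ℝ) < c ^ n := pow_pos hc n
    rw [hcz, show (|f.coeff i| : ℝ) * (c ^ i / c ^ n) * ‖z‖ ^ n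
        = ((|f.coeff i| : ℝ) * (c ^ i * ‖z‖ ^ n)) / c ^ n by ring,
      le_div_iff₀ hcn]
    nlinarith [h4]
  have hsum2 : ∑ i ∈ Finset.range n, (|f.coeff i| : ℝ) * ‖z‖ ^ i ≤
      (∑ i ∈ Finset.range n, (|f.coeff i| : ℝ) * c ^ ((i : ℤ) - (n : ℤ))) * ‖z‖ ^ n := by
    rw [Finset.sum_mul]
    exact Finset.sum_le_sum hterm
  have hfin : (|f.leadingCoeff| : ℝ) * ‖z‖ ^ n < (|f.leadingCoeff| : ℝ) * ‖z‖ ^ n :=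
    lt_of_le_of_lt (hkey.trans hsum2) (mul_lt_mul_of_pos_right hlead (pow_pos hzpos n))
  exact lt_irrefl _ hfin

private lemma eval_abs_lt (f H : Polynomial ℤ) (a b : ℤ) (hab2 : a ^ 2 < b ^ 2)
    (hlead : (|f.leadingCoeff| : ℝ) >
      ∑ i ∈ Finset.range f.natDegree,
        (|f.coeff i| : ℝ) * ((|a + b| : ℝ) / 2) ^ ((i : ℤ) - (f.natDegree : ℤ)))
    (hH : H ∣ f) (hdeg : 0 < H.natDegree) :
    |H.eval a| < |H.eval b| := by
  have hab0 : (a : ℝ) + (b : ℝ) ≠ 0 := by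
    intro h
    have hba' : (b : ℝ) = -(a : ℝ) := by linarith
    have hba : b = -a := by exact_mod_cast hba'
    subst hba
    simp [neg_sq] at hab2
  set c : ℝ := |(a : ℝ) + (b : ℝ)| / 2 with hcdef
  have hc : 0 < c := by
    have := abs_pos.mpr hab0
    simp only [hcdef]; linarith
  have hinj : Function.Injective (Int.castRingHom ℂ) := fun x y h => Int.cast_injective h
  set H' : Polynomial ℂ := H.map (Int.castRingHom ℂ) with hH'def
  have hH0 : H ≠ 0 := fun h => by simp [h] at hdeg
  have hH'0 : H' ≠ 0 := by
    simpa [hH'def, Polynomial.map_ne_zero_iff hinj] using hH0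
  have hsp : H'.Splits := IsAlgClosed.splits H'
  have heq := hsp.eq_prod_roots
  have hdeg' : H'.natDegree = H.natDegree := natDegree_map_eq_of_injective hinj H
  have hcard : H'.roots.card = H.natDegree := by
    rw [← hdeg']; exact (splits_iff_card_roots).mp hsp
  have hroots0 : H'.roots ≠ 0 := by
    intro h
    rw [h] at hcard
    simp at hcard
    omega
  have hroot : ∀ z ∈ H'.roots, ‖z‖ < c := by
    intro z hz
    obtain ⟨T, hT⟩ := hH
    have hz0 : H'.eval z = 0 := (Polynomial.isRoot_of_mem_roots hz)
    refine root_bound f c hc hlead z ?_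
    rw [hT, Polynomial.map_mul, eval_mul, ← hH'def, hz0, zero_mul]
  have hevalabs : ∀ x : ℤ, ‖((H.eval x : ℤ) : ℂ)‖ =
      ‖H'.leadingCoeff‖ *
        (H'.roots.map fun z => ‖(x : ℂ) - z‖).prod := by
    intro x
    have hx : ((H.eval x : ℤ) : ℂ) = H'.eval (x : ℂ) :=
      (Polynomial.eval_intCast_map (Int.castRingHom ℂ) H x).symm
    rw [hx]
    conv_lhs => rw [heq]
    rw [eval_mul, eval_C, norm_mul, Polynomial.eval_multiset_prod, Multiset.map_map,
      (fun m : Multiset ℂ => show ‖m.prod‖ = (m.map norm).prod from map_multiset_prod normHom m), Multiset.map_map]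
    congr 1
    exact congrArg Multiset.prod
      (Multiset.map_congr rfl (fun z _ => by
        simp only [Function.comp_apply, eval_sub, eval_X, eval_C]))
  have key : ‖((H.eval a : ℤ) : ℂ)‖ < ‖((H.eval b : ℤ) : ℂ)‖ := by
    rw [hevalabs a, hevalabs b]
    have hlpos : 0 < ‖H'.leadingCoeff‖ :=
      norm_pos_iff.mpr (leadingCoeff_ne_zero.mpr hH'0)
    refine mul_lt_mul_of_pos_left ?_ hlpos
    refine multiset_prod_lt hroots0 (fun z _ => norm_nonneg _) (fun z hz => ?_)
    have hzc : ‖z‖ < c := hroot z hz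
    have ht : |z.re| < c := lt_of_le_of_lt (Complex.abs_re_le_norm z) hzc
    rw [abs_lt] at ht
    obtain ⟨ht1, ht2⟩ := ht
    have hA2 : (a : ℝ) ^ 2 < (b : ℝ) ^ 2 := by exact_mod_cast hab2
    rw [Complex.norm_def, Complex.norm_def]
    apply Real.sqrt_lt_sqrt (Complex.normSq_nonneg _)
    rw [Complex.normSq_apply, Complex.normSq_apply]
    simp only [Complex.sub_re, Complex.sub_im, Complex.intCast_re, Complex.intCast_im]
    have h5 : ((b : ℝ) - (a : ℝ)) * ((a : ℝ) + (b : ℝ) - 2 * z.re) > 0 := by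
      rcases abs_cases ((a : ℝ) + (b : ℝ)) with ⟨he, hs⟩ | ⟨he, hs⟩
      · have hABpos : 0 < (a : ℝ) + (b : ℝ) := by
          rcases hs.lt_or_eq with h | h
          · exact h
          · exfalso; nlinarith
        have hBA : 0 < (b : ℝ) - (a : ℝ) := by nlinarith
        have h6 : (a : ℝ) + (b : ℝ) - 2 * z.re > 0 := by
          simp only [hcdef, he] at ht2; linarith
        exact mul_pos hBA h6
      · have hBA : (b : ℝ) - (a : ℝ) < 0 := by nlinarith
        have h6 : (a : ℝ) + (b : ℝ) - 2 * z.re < 0 := by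
          simp only [hcdef, he] at ht1; linarith
        exact mul_pos_of_neg_of_neg hBA h6
    nlinarith [h5]
  have key2 : |((H.eval a : ℤ) : ℝ)| < |((H.eval b : ℤ) : ℝ)| := by
    rwa [Complex.norm_intCast, Complex.norm_intCast] at key
  exact_mod_cast key2

theorem stmt16 (f : Polynomial ℤ) (a b : ℤ) (hab2 : a ^ 2 < b ^ 2)
    (hlead : (|f.leadingCoeff| : ℝ) >
      ∑ i ∈ Finset.range f.natDegree,
        (|f.coeff i| : ℝ) * ((|a + b| : ℝ) / 2) ^ ((i : ℤ) - (f.natDegree : ℤ)))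
    (p r : ℕ) (hp : p.Prime) (hr : r.Prime) (hpr : p ≠ r)
    (k₁ k₂ j : ℕ) (hk₁ : 0 < k₁) (hj : 0 < j) (hk : k₁ < k₂)
    (h1 : r ^ j < p ^ k₁) (h2 : r ^ j < p ^ (k₂ - k₁))
    (hfa : (f.eval a).natAbs = p ^ k₁) (hfb : (f.eval b).natAbs = p ^ k₂ * r ^ j)
    (hpd : ¬ (p : ℤ) ∣ f.derivative.eval a * f.derivative.eval b)
    (hrd : ¬ (r : ℤ) ∣ f.derivative.eval b) :
    FactorsAtMost f
      (1 + (⌊(((k₂ : ℝ) - (k₁ : ℝ)) / (j : ℝ)) * Real.logb (r : ℝ) (p : ℝ)⌋).toNat) := by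
  have hrR : (1 : ℝ) < r := by exact_mod_cast hr.one_lt
  have hpR : (1 : ℝ) < p := by exact_mod_cast hp.one_lt
  have hlogr : 0 < Real.log r := Real.log_pos hrR
  have hlogp : 0 < Real.log p := Real.log_pos hpR
  have hx1 : (1 : ℝ) ≤ (((k₂ : ℝ) - (k₁ : ℝ)) / (j : ℝ)) * Real.logb (r : ℝ) (p : ℝ) := by
    have hlt : (j : ℝ) * Real.log r < ((k₂ : ℝ) - (k₁ : ℝ)) * Real.log p := by
      have h2R : (r : ℝ) ^ j < (p : ℝ) ^ (k₂ - k₁) := by exact_mod_cast h2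
      have hl := Real.log_lt_log (by positivity) h2R
      rw [Real.log_pow, Real.log_pow, Nat.cast_sub hk.le] at hl
      exact hl
    rw [Real.logb, div_mul_div_comm, le_div_iff₀ (by positivity)]
    linarith
  have hBt : 1 ≤ (⌊(((k₂ : ℝ) - (k₁ : ℝ)) / (j : ℝ)) * Real.logb (r : ℝ) (p : ℝ)⌋).toNat := by
    have h1' : (1 : ℤ) ≤ ⌊(((k₂ : ℝ) - (k₁ : ℝ)) / (j : ℝ)) * Real.logb (r : ℝ) (p : ℝ)⌋ :=
      Int.le_floor.mpr (by exact_mod_cast hx1)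
    omega
  set B : ℕ := 1 + (⌊(((k₂ : ℝ) - (k₁ : ℝ)) / (j : ℝ)) * Real.logb (r : ℝ) (p : ℝ)⌋).toNat
    with hBdef
  intro g hg hprod
  have hfa0 : f.eval a ≠ 0 := by
    intro h
    rw [h] at hfa
    simp only [Int.natAbs_zero] at hfa
    exact (pow_pos hp.pos k₁).ne' hfa.symm
  have hfb0 : f.eval b ≠ 0 := by
    intro h
    rw [h] at hfb
    simp only [Int.natAbs_zero] at hfb
    exact (Nat.mul_pos (pow_pos hp.pos k₂) (pow_pos hr.pos j)).ne' hfb.symm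
  have hf0 : f ≠ 0 := fun h => hfa0 (by simp [h])
  have hinjQ : Function.Injective (algebraMap ℤ ℚ) := fun x y h => by
    rw [algebraMap_int_eq] at h; exact Int.cast_injective h
  -- integer models of the rational factors
  have haux : ∀ i : Fin (B + 1), ∃ h : Polynomial ℤ, h.IsPrimitive ∧ 0 < h.natDegree ∧
      h.map (algebraMap ℤ ℚ) ∣ g i := by
    intro i
    have hgi0 : g i ≠ 0 := fun h => by
      have := hg i; rw [h] at this; simp at this
    set N := IsLocalization.integerNormalization (nonZeroDivisors ℤ) (g i) with hNdef
    obtain ⟨⟨ci, hcimem⟩, hci⟩ :=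
      IsLocalization.integerNormalization_map_to_map (nonZeroDivisors ℤ) (g i)
    have hci0 : ci ≠ 0 := mem_nonZeroDivisors_iff_ne_zero.mp hcimem
    have hciQ : ((ci : ℚ)) ≠ 0 := Int.cast_ne_zero.mpr hci0
    have hsmul : N.map (algebraMap ℤ ℚ) = Polynomial.C ((ci : ℚ)) * g i := by
      rw [hNdef, hci, ← Int.cast_smul_eq_zsmul ℚ, Polynomial.smul_eq_C_mul]
    refine ⟨N.primPart, isPrimitive_primPart N, ?_, ?_⟩
    · have e1 : N.primPart.natDegree = N.natDegree := natDegree_primPart N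
      have e2 : N.natDegree = (N.map (algebraMap ℤ ℚ)).natDegree :=
        (natDegree_map_eq_of_injective hinjQ N).symm
      rw [e1, e2, hsmul, natDegree_C_mul hciQ]
      exact hg i
    · have h2 : N.primPart.map (algebraMap ℤ ℚ) ∣ N.map (algebraMap ℤ ℚ) :=
        Polynomial.map_dvd _ (primPart_dvd N)
      rw [hsmul] at h2
      exact h2.trans
        (associated_unit_mul_left _ _ (isUnit_C.mpr (isUnit_iff_ne_zero.mpr hciQ))).dvd
  choose H hprim hdegH hdvdg using haux
  -- primitive polynomials dividing over ℚ divide over ℤ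
  have hprimdvd : ∀ P : Polynomial ℤ, P.IsPrimitive →
      P.map (algebraMap ℤ ℚ) ∣ f.map (algebraMap ℤ ℚ) → P ∣ f := by
    intro P hP hPd
    have hcont : (algebraMap ℤ ℚ) f.content ≠ 0 := fun h =>
      hf0 (content_eq_zero_iff.mp (hinjQ (h.trans (map_zero _).symm)))
    have heqf : f.map (algebraMap ℤ ℚ) =
        Polynomial.C ((algebraMap ℤ ℚ) f.content) * (f.primPart.map (algebraMap ℤ ℚ)) := by
      conv_lhs => rw [f.eq_C_content_mul_primPart]
      rw [Polynomial.map_mul, map_C]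
    rw [heqf] at hPd
    have hPd2 : P.map (algebraMap ℤ ℚ) ∣ f.primPart.map (algebraMap ℤ ℚ) :=
      hPd.trans (associated_unit_mul_left _ _
        (isUnit_C.mpr (isUnit_iff_ne_zero.mpr hcont))).dvd
    exact (hP.dvd_of_fraction_map_dvd_fraction_map (K := ℚ)
      hPd2).trans (primPart_dvd f)
  have hgdvd : ∀ i, g i ∣ f.map (algebraMap ℤ ℚ) := by
    intro i
    rw [algebraMap_int_eq, hprod]
    exact Finset.dvd_prod_of_mem g (Finset.mem_univ i)
  have hHdvdf : ∀ i, H i ∣ f := fun i =>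
    hprimdvd _ (hprim i) ((hdvdg i).trans (hgdvd i))
  have hHHdvdf : ∀ i j : Fin (B + 1), i ≠ j → H i * H j ∣ f := by
    intro i j hij
    refine hprimdvd _ ((hprim i).mul (hprim j)) ?_
    rw [Polynomial.map_mul]
    refine dvd_trans (mul_dvd_mul (hdvdg i) (hdvdg j)) ?_
    rw [algebraMap_int_eq, hprod, ← Finset.mul_prod_erase Finset.univ g (Finset.mem_univ i)]
    exact mul_dvd_mul (dvd_refl (g i))
      (Finset.dvd_prod_of_mem g (Finset.mem_erase.mpr ⟨hij.symm, Finset.mem_univ j⟩))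
  -- each factor has |H i (b)| ≥ 2
  have heval2 : ∀ i, 2 ≤ |(H i).eval b| := by
    intro i
    have hda : (H i).eval a ∣ f.eval a := eval_dvd (hHdvdf i)
    have ha0 : (H i).eval a ≠ 0 := fun h => hfa0 (zero_dvd_iff.mp (h ▸ hda))
    have h1a : 1 ≤ |(H i).eval a| := Int.one_le_abs ha0
    have hlt := eval_abs_lt f (H i) a b hab2 hlead (hHdvdf i) (hdegH i)
    linarith
  -- each factor value at b is divisible by p or r
  have htag : ∀ i, ((p : ℤ) ∣ (H i).eval b) ∨ ((r : ℤ) ∣ (H i).eval b) := by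
    intro i
    have hdb : (H i).eval b ∣ f.eval b := eval_dvd (hHdvdf i)
    have h2b := heval2 i
    have hm1 : ((H i).eval b).natAbs ≠ 1 := by
      rw [Int.abs_eq_natAbs] at h2b
      omega
    obtain ⟨s, hs, hsd⟩ := Nat.exists_prime_and_dvd hm1
    have hsd2 : s ∣ (f.eval b).natAbs := dvd_trans hsd (Int.natAbs_dvd_natAbs.mpr hdb)
    rw [hfb] at hsd2
    have hsi : (s : ℤ) ∣ (H i).eval b :=
      Int.dvd_natAbs.mp (Int.natCast_dvd_natCast.mpr hsd)
    rcases (Nat.Prime.dvd_mul hs).mp hsd2 with hcase | hcase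
    · left; rwa [(Nat.prime_dvd_prime_iff_eq hs hp).mp (hs.dvd_of_dvd_pow hcase)] at hsi
    · right; rwa [(Nat.prime_dvd_prime_iff_eq hs hr).mp (hs.dvd_of_dvd_pow hcase)] at hsi
  -- a shared prime divisor of two factor values divides f'(b)
  have hpair : ∀ i j : Fin (B + 1), i ≠ j → ∀ s : ℤ, s ∣ (H i).eval b → s ∣ (H j).eval b →
      s ∣ f.derivative.eval b := by
    intro i j hij s hi hj
    obtain ⟨T, hT⟩ := hHHdvdf i j hij
    rw [hT]
    simp only [derivative_mul, eval_add, eval_mul]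
    exact dvd_add (dvd_mul_of_dvd_left (dvd_add (hj.mul_left _) (hi.mul_right _)) _)
      ((hi.mul_right _).mul_right _)
  have hPfalse : ¬ (p : ℤ) ∣ f.derivative.eval b := fun h => hpd (h.mul_left _)
  have hB3 : 3 ≤ B + 1 := by omega
  set i0 : Fin (B + 1) := ⟨0, by omega⟩ with hi0
  set i1 : Fin (B + 1) := ⟨1, by omega⟩ with hi1
  set i2 : Fin (B + 1) := ⟨2, by omega⟩ with hi2
  have h01 : i0 ≠ i1 := by simp [hi0, hi1, Fin.ext_iff]
  have h02 : i0 ≠ i2 := by simp [hi0, hi2, Fin.ext_iff]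
  have h12 : i1 ≠ i2 := by simp [hi1, hi2, Fin.ext_iff]
  rcases htag i0 with t0 | t0 <;> rcases htag i1 with t1 | t1 <;> rcases htag i2 with t2 | t2
  · exact hPfalse (hpair i0 i1 h01 _ t0 t1)
  · exact hPfalse (hpair i0 i1 h01 _ t0 t1)
  · exact hPfalse (hpair i0 i2 h02 _ t0 t2)
  · exact hrd (hpair i1 i2 h12 _ t1 t2)
  · exact hPfalse (hpair i1 i2 h12 _ t1 t2)
  · exact hrd (hpair i0 i2 h02 _ t0 t2)
  · exact hrd (hpair i0 i1 h01 _ t0 t1)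
  · exact hrd (hpair i0 i1 h01 _ t0 t1)
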